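/- (Comparison with 1-choice) For any k ≥ 0, there is a coupling of the local search allocation load vector X^(k) and the 1-choice load vector X̄^(k) (each ball placed directly at its uniformly random birthplace) such that with probability 1, X̄^(k) majorizes X^(k). Consequently, the maximum load X̄_max^(k) of the 1-choice process stochastically dominates the maximum load X_max^(k) of the local search allocation. -/

import Mathlib

open Finset

variable {V : Type*} [Fintype V] [DecidableEq V]

/-- One step of the local search from `u` with current loads `x`:
among the neighbors of `u` (listed in the tie-breaking order `ξ u`) that have load
strictly smaller than `x u`, move to the first one of minimal load; if there is no
such neighbor, stay at `u` (i.e. `u` is a local minimum). -/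
def lsNext (G : SimpleGraph V) [DecidableRel G.Adj] (ξ : V → List V)
    (x : V → ℕ) (u : V) : V :=
  ((((ξ u).filter (fun w => decide (G.Adj u w ∧ x w < x u)))).argmin x).getD u

/-- Iterate the local search for at most `n` steps (stopping at a local minimum). -/
def lsIter (G : SimpleGraph V) [DecidableRel G.Adj] (ξ : V → List V)
    (x : V → ℕ) : ℕ → V → V
  | 0, u => u
  | n + 1, u => if lsNext G ξ x u = u then u else lsIter G ξ x n (lsNext G ξ x u)

/-- The vertex where a ball born at `u` is placed: since each local-search step strictly
decreases the load, `x u` steps always suffice to reach a local minimum. -/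
def lsPlace (G : SimpleGraph V) [DecidableRel G.Adj] (ξ : V → List V)
    (x : V → ℕ) (u : V) : V :=
  lsIter G ξ x (x u) u

/-- Add one ball born at `u` to the load vector `x`. -/
def lsAdd (G : SimpleGraph V) [DecidableRel G.Adj] (ξ : V → List V)
    (x : V → ℕ) (u : V) : V → ℕ :=
  fun v => x v + if v = lsPlace G ξ x u then 1 else 0

/-- The load vector after allocating the balls with birthplaces `bs` (in order) by
local search allocation with the deterministic tie-breaking rule `ξ`. -/
def lsLoads (G : SimpleGraph V) [DecidableRel G.Adj] (ξ : V → List V)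
    (bs : List V) : V → ℕ :=
  bs.foldl (lsAdd G ξ) (fun _ => 0)

open scoped Classical

/-- `b` majorizes `a`: for every `κ`, the sum of the `κ` largest entries of `b` is at
least the sum of the `κ` largest entries of `a` (here both vectors have equal total
sum, so this is the usual majorization). -/
def Majorizes (b a : V → ℕ) : Prop :=
  ∀ A : Finset V, ∃ B : Finset V, B.card = A.card ∧ ∑ v ∈ A, a v ≤ ∑ v ∈ B, b v

/-- The load vector of the 1-choice process: each ball is placed directly at its
birthplace. -/
def oneChoiceLoads (bs : List V) : V → ℕ := fun v => bs.count v

set_option linter.unusedSectionVars false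
namespace LSC

variable {V : Type*} [Fintype V] [DecidableEq V]

noncomputable def emb : V → ℕ := fun v => (Fintype.equivFin V v : ℕ)

/-- `v` comes before `w`: larger load first, ties broken by a fixed order. -/
def rel (x : V → ℕ) (v w : V) : Prop :=
  x w < x v ∨ (x w = x v ∧ emb v ≤ emb w)

lemma rel_total (x : V → ℕ) : ∀ v w : V, rel x v w ∨ rel x w v := by
  intro v w; unfold rel; omega

lemma rel_trans (x : V → ℕ) : ∀ v w z : V, rel x v w → rel x w z → rel x v z := by
  intro v w z h1 h2; unfold rel at *; omega

/-- The list of vertices sorted by decreasing load (fixed tie-breaking). -/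
noncomputable def L (x : V → ℕ) : List V :=
  @List.insertionSort V (rel x) (Classical.decRel _) Finset.univ.toList

lemma L_perm (x : V → ℕ) : (L x).Perm Finset.univ.toList := by
  letI := Classical.decRel (rel x)
  exact List.perm_insertionSort _ _

lemma L_length (x : V → ℕ) : (L x).length = Fintype.card V := by
  rw [(L_perm x).length_eq, Finset.length_toList, Finset.card_univ]

lemma L_nodup (x : V → ℕ) : (L x).Nodup :=
  (L_perm x).nodup_iff.mpr (Finset.nodup_toList _)

lemma L_mem (x : V → ℕ) (v : V) : v ∈ L x :=
  (L_perm x).mem_iff.mpr (by simp [Finset.mem_toList])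

lemma L_sorted (x : V → ℕ) : (L x).Pairwise (rel x) := by
  letI := Classical.decRel (rel x)
  haveI : IsTotal V (rel x) := ⟨rel_total x⟩
  haveI : IsTrans V (rel x) := ⟨rel_trans x⟩
  exact List.pairwise_insertionSort _ _

lemma L_indexOf_lt (x : V → ℕ) (v : V) : (L x).idxOf v < (L x).length :=
  List.idxOf_lt_length_iff.mpr (L_mem x v)

/-- the `i`-th largest load value. -/
noncomputable def valL (x : V → ℕ) (i : ℕ) : ℕ := ((L x).map x).getD i 0

lemma valL_eq (x : V → ℕ) {i : ℕ} (h : i < (L x).length) :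
    valL x i = x ((L x)[i]) := by
  have hm : i < ((L x).map x).length := by simpa using h
  rw [valL, List.getD_eq_getElem _ _ hm, List.getElem_map]

lemma valL_anti (x : V → ℕ) {i j : ℕ} (hij : i ≤ j) (hj : j < (L x).length) :
    valL x j ≤ valL x i := by
  rcases eq_or_lt_of_le hij with rfl | hlt
  · exact le_refl _
  · have hi : i < (L x).length := lt_trans hlt hj
    have hrel : rel x ((L x)[i]) ((L x)[j]) :=
      List.pairwise_iff_getElem.mp (L_sorted x) i j hi hj hlt
    rw [valL_eq x hi, valL_eq x hj]
    rcases hrel with h | ⟨h, _⟩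
    · exact le_of_lt h
    · exact le_of_eq h

/-- sum of the `κ` largest loads. -/
noncomputable def PL (x : V → ℕ) (κ : ℕ) : ℕ := (((L x).map x).take κ).sum

lemma PL_zero (x : V → ℕ) : PL x 0 = 0 := rfl

lemma PL_succ (x : V → ℕ) {κ : ℕ} (h : κ < (L x).length) :
    PL x (κ + 1) = PL x κ + valL x κ := by
  have hm : κ < ((L x).map x).length := by simpa using h
  rw [PL, List.take_succ, List.sum_append, List.getElem?_eq_getElem hm]
  rw [valL, List.getD_eq_getElem _ _ hm]
  simp [PL]

lemma PL_min (x : V → ℕ) (κ : ℕ) : PL x κ = PL x (min κ (Fintype.card V)) := by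
  rcases le_or_gt κ (Fintype.card V) with h | h
  · rw [min_eq_left h]
  · rw [min_eq_right (le_of_lt h)]
    have hlen : ((L x).map x).length = Fintype.card V := by simp [L_length]
    unfold PL
    rw [List.take_of_length_le (by omega), List.take_of_length_le (by omega)]

lemma PL_add (x : V → ℕ) (κ t : ℕ) (h : κ + t ≤ Fintype.card V) :
    PL x (κ + t) = PL x κ + ∑ i ∈ Finset.range t, valL x (κ + i) := by
  induction t with
  | zero => simp
  | succ t ih =>
    have h1 : κ + t < (L x).length := by rw [L_length]; omega
    have : κ + (t + 1) = (κ + t) + 1 := rfl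
    rw [this, PL_succ x h1, ih (by omega), Finset.sum_range_succ, add_assoc]

/-- the set of the `κ` first (largest) vertices. -/
noncomputable def Bset (x : V → ℕ) (κ : ℕ) : Finset V := ((L x).take κ).toFinset

lemma take_nodup (x : V → ℕ) (κ : ℕ) : ((L x).take κ).Nodup :=
  ((L x).take_sublist κ).nodup (L_nodup x)

lemma card_Bset (x : V → ℕ) (κ : ℕ) :
    (Bset x κ).card = min κ (Fintype.card V) := by
  rw [Bset, List.toFinset_card_of_nodup (take_nodup x κ), List.length_take, L_length]

lemma sum_Bset (x : V → ℕ) (κ : ℕ) (y : V → ℕ) :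
    ∑ v ∈ Bset x κ, y v = (((L x).take κ).map y).sum :=
  List.sum_toFinset y (take_nodup x κ)

lemma PL_eq_sum_Bset (x : V → ℕ) (κ : ℕ) : PL x κ = ∑ v ∈ Bset x κ, x v := by
  rw [sum_Bset, List.map_take, PL]

lemma mem_Bset (x : V → ℕ) (w : V) (κ : ℕ) :
    w ∈ Bset x κ ↔ (L x).idxOf w < κ := by
  rw [Bset, List.mem_toFinset]
  constructor
  · intro hw
    obtain ⟨j, hj, hjw⟩ := List.mem_iff_getElem.mp hw
    have hj' : j < (L x).length := lt_of_lt_of_le hj (by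
      rw [List.length_take]; exact min_le_right _ _)
    have hL : (L x)[j] = w := by rw [← List.getElem_take (xs := L x) (h := hj)]; exact hjw
    have := List.Nodup.idxOf_getElem (L_nodup x) j hj'
    rw [hL] at this
    rw [this]
    have : j < min κ (L x).length := by rwa [List.length_take] at hj
    omega
  · intro h
    have hlt : (L x).idxOf w < (L x).length := L_indexOf_lt x w
    refine List.mem_iff_getElem.mpr ⟨(L x).idxOf w, ?_, ?_⟩
    · rw [List.length_take]; omega
    · rw [List.getElem_take]; exact List.getElem_idxOf hlt

/-- add one ball at `w`. -/
def add1 (y : V → ℕ) (w : V) : V → ℕ := fun v => y v + if v = w then 1 else 0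

lemma sum_add1_set (y : V → ℕ) (w : V) (B : Finset V) :
    ∑ v ∈ B, add1 y w v = (∑ v ∈ B, y v) + (if w ∈ B then 1 else 0) := by
  simp [add1, Finset.sum_add_distrib, Finset.sum_ite_eq' B w (fun _ => (1 : ℕ))]

/-- any `|A|`-set sum is at most the top-`|A|` sum : helper on lists -/
lemma take_sum_le (x : V → ℕ) (c : ℕ) :
    ∀ (l : List V) (κ : ℕ), (∀ w ∈ l, x w ≤ c) →
      ((l.take (κ + 1)).map x).sum ≤ c + ((l.take κ).map x).sum := by
  intro l
  induction l with
  | nil => intro κ _; simp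
  | cons w t ih =>
    intro κ hc
    cases κ with
    | zero => simpa using hc w (by simp)
    | succ κ =>
      simp only [List.take_succ_cons, List.map_cons, List.sum_cons]
      have := ih κ (fun z hz => hc z (by simp [hz]))
      omega

lemma sum_le_sorted (x : V → ℕ) :
    ∀ (l : List V), l.Pairwise (fun v w => x w ≤ x v) →
      ∀ A : Finset V, (∀ v ∈ A, v ∈ l) → ∑ v ∈ A, x v ≤ ((l.take A.card).map x).sum := by
  intro l
  induction l with
  | nil =>
    intro _ A hA
    have : A = ∅ := Finset.eq_empty_of_forall_notMem (fun v hv => by simpa using hA v hv)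
    simp [this]
  | cons v t ih =>
    intro hs A hA
    have hvt : ∀ w ∈ t, x w ≤ x v := fun _ hw => List.rel_of_pairwise_cons hs hw
    have ht : t.Pairwise (fun v w => x w ≤ x v) := hs.of_cons
    by_cases hv : v ∈ A
    · have hcard : A.card = (A.erase v).card + 1 := (Finset.card_erase_add_one hv).symm
      have hsub : ∀ w ∈ A.erase v, w ∈ t := by
        intro w hw
        have hne : w ≠ v := Finset.ne_of_mem_erase hw
        have := hA w (Finset.mem_of_mem_erase hw)
        simp only [List.mem_cons] at this
        tauto
      have := ih ht (A.erase v) hsub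
      rw [hcard, List.take_succ_cons, List.map_cons, List.sum_cons,
        ← Finset.add_sum_erase A x hv]
      omega
    · have hsub : ∀ w ∈ A, w ∈ t := by
        intro w hw
        have := hA w hw
        simp only [List.mem_cons] at this
        rcases this with rfl | h
        · exact absurd hw hv
        · exact h
      have h1 := ih ht A hsub
      cases hAc : A.card with
      | zero =>
        have : A = ∅ := Finset.card_eq_zero.mp hAc
        simp [this]
      | succ κ =>
        rw [hAc] at h1
        have h2 := take_sum_le x (x v) t κ hvt
        rw [List.take_succ_cons, List.map_cons, List.sum_cons]
        omega

lemma sum_le_PL (x : V → ℕ) (A : Finset V) : ∑ v ∈ A, x v ≤ PL x A.card := by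
  have hs : (L x).Pairwise (fun v w => x w ≤ x v) := by
    refine (L_sorted x).imp ?_
    intro v w h
    rcases h with h | ⟨h, _⟩
    · exact le_of_lt h
    · exact le_of_eq h
  have := sum_le_sorted x (L x) hs A (fun v _ => L_mem x v)
  rwa [List.map_take, ← PL] at this

lemma Q1 (y : V → ℕ) (w : V) (κ : ℕ) : PL (add1 y w) κ ≤ PL y κ + 1 := by
  rw [PL_min (add1 y w) κ, PL_min y κ]
  set κ' := min κ (Fintype.card V) with hκ'
  have hcard : (Bset (add1 y w) κ').card = κ' := by rw [card_Bset]; omega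
  have h1 : ∑ v ∈ Bset (add1 y w) κ', y v ≤ PL y κ' := by
    have := sum_le_PL y (Bset (add1 y w) κ'); rwa [hcard] at this
  calc PL (add1 y w) κ' = ∑ v ∈ Bset (add1 y w) κ', add1 y w v :=
        PL_eq_sum_Bset _ _
    _ = (∑ v ∈ Bset (add1 y w) κ', y v) + _ := sum_add1_set _ _ _
    _ ≤ PL y κ' + 1 := by split <;> omega

lemma Q2 (y : V → ℕ) (w : V) (κ : ℕ) : PL y κ ≤ PL (add1 y w) κ := by
  rw [PL_min (add1 y w) κ, PL_min y κ]
  set κ' := min κ (Fintype.card V) with hκ'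
  have hcard : (Bset y κ').card = κ' := by rw [card_Bset]; omega
  have h1 : ∑ v ∈ Bset y κ', add1 y w v ≤ PL (add1 y w) κ' := by
    have := sum_le_PL (add1 y w) (Bset y κ'); rwa [hcard] at this
  have h2 : ∑ v ∈ Bset y κ', y v ≤ ∑ v ∈ Bset y κ', add1 y w v :=
    Finset.sum_le_sum (fun v _ => by simp [add1])
  calc PL y κ' = ∑ v ∈ Bset y κ', y v := PL_eq_sum_Bset _ _
    _ ≤ PL (add1 y w) κ' := le_trans h2 h1

lemma Q3 (y : V → ℕ) (w : V) (κ : ℕ) (h : (L y).idxOf w < κ) :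
    PL y κ + 1 ≤ PL (add1 y w) κ := by
  rw [PL_min (add1 y w) κ, PL_min y κ]
  set κ' := min κ (Fintype.card V) with hκ'
  have hidx : (L y).idxOf w < κ' := by
    have := L_indexOf_lt y w; rw [L_length] at this; omega
  have hcard : (Bset y κ').card = κ' := by rw [card_Bset]; omega
  have hw : w ∈ Bset y κ' := (mem_Bset y w κ').mpr hidx
  have h1 : ∑ v ∈ Bset y κ', add1 y w v ≤ PL (add1 y w) κ' := by
    have := sum_le_PL (add1 y w) (Bset y κ'); rwa [hcard] at this
  have h2 : ∑ v ∈ Bset y κ', add1 y w v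
      = (∑ v ∈ Bset y κ', y v) + 1 := by rw [sum_add1_set, if_pos hw]
  rw [PL_eq_sum_Bset y κ']
  omega

lemma Q5 (y : V → ℕ) (w : V) (κ : ℕ) (h2 : κ + 1 ≤ Fintype.card V)
    (h : PL y (κ + 1) < PL (add1 y w) (κ + 1)) : valL y κ ≤ y w := by
  have hlen : (L y).length = Fintype.card V := L_length y
  have hcard : (Bset (add1 y w) (κ + 1)).card = κ + 1 := by rw [card_Bset]; omega
  have h1 : ∑ v ∈ Bset (add1 y w) (κ + 1), y v ≤ PL y (κ + 1) := by
    have := sum_le_PL y (Bset (add1 y w) (κ + 1)); rwa [hcard] at this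
  have h2' := PL_eq_sum_Bset (add1 y w) (κ + 1)
  rw [sum_add1_set] at h2'
  have hwB : w ∈ Bset (add1 y w) (κ + 1) := by
    by_contra hc; rw [if_neg hc] at h2'; omega
  rw [if_pos hwB] at h2'
  have hsump : ∑ v ∈ Bset (add1 y w) (κ + 1), y v = PL y (κ + 1) := by omega
  by_contra hcon
  push_neg at hcon
  -- w is not in the top-(κ+1) set of y
  have hwA : w ∉ Bset y (κ + 1) := by
    intro hmem
    have hidx := (mem_Bset y w (κ + 1)).mp hmem
    have hi : (L y).idxOf w < (L y).length := L_indexOf_lt y w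
    have := valL_anti y (Nat.lt_succ_iff.mp hidx) (by omega : κ < (L y).length)
    rw [valL_eq y hi, List.getElem_idxOf hi] at this
    omega
  have hcardA : (Bset y (κ + 1)).card = κ + 1 := by rw [card_Bset]; omega
  have hns : ¬ Bset y (κ + 1) ⊆ Bset (add1 y w) (κ + 1) := by
    intro hs
    exact hwA (Finset.eq_of_subset_of_card_le hs (by omega) ▸ hwB)
  obtain ⟨z, hzA, hzB⟩ := Finset.not_subset.mp hns
  have hz : valL y κ ≤ y z := by
    have hidx := (mem_Bset y z (κ + 1)).mp hzA
    have hi : (L y).idxOf z < (L y).length := L_indexOf_lt y z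
    have := valL_anti y (Nat.lt_succ_iff.mp hidx) (by omega : κ < (L y).length)
    rwa [valL_eq y hi, List.getElem_idxOf hi] at this
  -- swap w for z to get a bigger sum, contradiction
  set B := Bset (add1 y w) (κ + 1) with hB
  have hzBe : z ∉ B.erase w := fun hc => hzB (Finset.mem_of_mem_erase hc)
  have hc1 : (insert z (B.erase w)).card = κ + 1 := by
    rw [Finset.card_insert_of_notMem hzBe, Finset.card_erase_of_mem hwB, hcard]; omega
  have hs1 : ∑ v ∈ insert z (B.erase w), y v = y z + ∑ v ∈ B.erase w, y v :=
    Finset.sum_insert hzBe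
  have hs2 : y w + ∑ v ∈ B.erase w, y v = ∑ v ∈ B, y v :=
    Finset.add_sum_erase B y hwB
  have hle := sum_le_PL y (insert z (B.erase w))
  rw [hc1] at hle
  omega

lemma Q6 (y : V → ℕ) (w : V) (κ : ℕ) (h2 : κ + 1 ≤ Fintype.card V)
    (h : valL y κ ≤ y w) : PL y (κ + 1) + 1 ≤ PL (add1 y w) (κ + 1) := by
  by_cases hw : (L y).idxOf w < κ + 1
  · exact Q3 y w (κ + 1) hw
  · push_neg at hw
    have hlen : (L y).length = Fintype.card V := L_length y
    have hidxlt : (L y).idxOf w < (L y).length := L_indexOf_lt y w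
    have hww : y w = valL y ((L y).idxOf w) := by
      rw [valL_eq y hidxlt, List.getElem_idxOf hidxlt]
    have hle : valL y ((L y).idxOf w) ≤ valL y κ :=
      valL_anti y (by omega) hidxlt
    have heq : y w = valL y κ := by omega
    have hκlt : κ < (L y).length := by omega
    set z := (L y)[κ] with hz
    have hzmem : z ∈ Bset y (κ + 1) := by
      rw [mem_Bset, hz, List.Nodup.idxOf_getElem (L_nodup y) κ hκlt]
      omega
    have hzval : y z = valL y κ := (valL_eq y hκlt).symm
    have hwB : w ∉ Bset y (κ + 1) := by
      rw [mem_Bset]; omega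
    have hwz : w ∉ (Bset y (κ + 1)).erase z := fun hc => hwB (Finset.mem_of_mem_erase hc)
    have hcardA : (Bset y (κ + 1)).card = κ + 1 := by rw [card_Bset]; omega
    set A := insert w ((Bset y (κ + 1)).erase z) with hA
    have hcA : A.card = κ + 1 := by
      rw [hA, Finset.card_insert_of_notMem hwz, Finset.card_erase_of_mem hzmem, hcardA]; omega
    have hs1 : ∑ v ∈ A, y v = y w + ∑ v ∈ (Bset y (κ + 1)).erase z, y v :=
      Finset.sum_insert hwz
    have hs2 : y z + ∑ v ∈ (Bset y (κ + 1)).erase z, y v = ∑ v ∈ Bset y (κ + 1), y v :=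
      Finset.add_sum_erase _ y hzmem
    have hsA : ∑ v ∈ A, y v = PL y (κ + 1) := by
      rw [PL_eq_sum_Bset y (κ + 1)]
      omega
    have hwA : w ∈ A := Finset.mem_insert_self _ _
    have hadd : ∑ v ∈ A, add1 y w v = (∑ v ∈ A, y v) + 1 := by
      rw [sum_add1_set, if_pos hwA]
    have := sum_le_PL (add1 y w) A
    rw [hcA] at this
    omega

/-- **The coupling step lemma.** -/
lemma stepLemma (a b : V → ℕ) (u p : V)
    (hmaj : ∀ κ, PL a κ ≤ PL b κ)
    (hup : p = u ∨ a p < a u) :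
    ∀ κ, PL (add1 a p) κ ≤ PL (add1 b ((L b).getD ((L a).idxOf u) u)) κ := by
  have hlenb : (L b).length = Fintype.card V := L_length b
  have hlena : (L a).length = Fintype.card V := L_length a
  set ℓ := (L a).idxOf u with hℓdef
  have hℓ : ℓ < Fintype.card V := by
    have := L_indexOf_lt a u; omega
  have hℓb : ℓ < (L b).length := by omega
  set w := (L b).getD ℓ u with hwdef
  have hwe : w = (L b)[ℓ] := List.getD_eq_getElem _ _ hℓb
  have hwi : (L b).idxOf w = ℓ := by
    rw [hwe]; exact List.Nodup.idxOf_getElem (L_nodup b) ℓ hℓb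
  set ι := (L a).idxOf p with hιdef
  have hιlt : ι < (L a).length := L_indexOf_lt a p
  have hℓι : ℓ ≤ ι := by
    rcases hup with rfl | hlt
    · omega
    · by_contra hc
      push_neg at hc
      have hrel : rel a ((L a)[ι]) ((L a)[ℓ]'(by omega)) :=
        List.pairwise_iff_getElem.mp (L_sorted a) ι ℓ hιlt (by omega) hc
      rw [List.getElem_idxOf hιlt, List.getElem_idxOf (by omega : ℓ < (L a).length)] at hrel
      rcases hrel with h | ⟨h, _⟩ <;> omega
  have hvalι : valL a ι = a p := by
    rw [valL_eq a hιlt, List.getElem_idxOf hιlt]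
  intro κ
  rcases le_or_gt κ ℓ with hκℓ | hκℓ
  · -- κ ≤ ℓ
    cases κ with
    | zero => simp [PL_zero]
    | succ m =>
      have hm1 : m + 1 ≤ Fintype.card V := by omega
      by_cases hP : PL (add1 a p) (m + 1) ≤ PL a (m + 1)
      · exact hP.trans ((hmaj (m + 1)).trans (Q2 b w (m + 1)))
      · push_neg at hP
        have hval : valL a m ≤ a p := Q5 a p m hm1 hP
        by_cases hPb : PL a (m + 1) + 1 ≤ PL b (m + 1)
        · exact le_trans (Q1 a p (m + 1)) (le_trans hPb (Q2 b w (m + 1)))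
        · push_neg at hPb
          have hEq : PL b (m + 1) = PL a (m + 1) := le_antisymm (by omega) (hmaj (m + 1))
          -- values of a on [m, ι] are all equal to a p
          have hvala : ∀ j, m ≤ j → j ≤ ι → valL a j = a p := by
            intro j hj1 hj2
            have hjlt : j < (L a).length := by omega
            have h1 : valL a j ≤ valL a m := valL_anti a hj1 hjlt
            have h2 : valL a ι ≤ valL a j := valL_anti a hj2 hιlt
            omega
          -- valL b m ≤ a p
          have hvb : valL b m ≤ a p := by
            have ha1 : PL a (m + 1) = PL a m + valL a m := PL_succ a (by omega)
            have hb1 : PL b (m + 1) = PL b m + valL b m := PL_succ b (by omega)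
            have := hmaj m
            omega
          -- compare prefix sums at ℓ + 1
          set s := ℓ - (m + 1) with hsdef
          have hms : (m + 1) + (s + 1) = ℓ + 1 := by omega
          have hPaℓ : PL a (ℓ + 1) = PL a (m + 1) + (s + 1) * a p := by
            rw [← hms, PL_add a (m + 1) (s + 1) (by omega)]
            congr 1
            rw [Finset.sum_congr rfl (fun i hi => ?_), Finset.sum_const,
              Finset.card_range, smul_eq_mul]
            have hi' := Finset.mem_range.mp hi
            exact hvala (m + 1 + i) (by omega) (by omega)
          have hPbℓ : PL b (ℓ + 1) = PL b (m + 1)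
              + ∑ i ∈ Finset.range (s + 1), valL b (m + 1 + i) := by
            rw [← hms, PL_add b (m + 1) (s + 1) (by omega)]
          have hsplit : ∑ i ∈ Finset.range (s + 1), valL b (m + 1 + i)
              = (∑ i ∈ Finset.range s, valL b (m + 1 + i)) + valL b (ℓ) := by
            rw [Finset.sum_range_succ]
            congr 2
            omega
          have hbound : ∑ i ∈ Finset.range s, valL b (m + 1 + i) ≤ s * a p := by
            calc ∑ i ∈ Finset.range s, valL b (m + 1 + i)
                ≤ ∑ _i ∈ Finset.range s, a p := by
                  refine Finset.sum_le_sum (fun i hi => ?_)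
                  have hi' := Finset.mem_range.mp hi
                  have := valL_anti b (by omega : m ≤ m + 1 + i)
                    (by omega : m + 1 + i < (L b).length)
                  omega
              _ = s * a p := by rw [Finset.sum_const, Finset.card_range, smul_eq_mul]
          have hmajℓ := hmaj (ℓ + 1)
          have hmul : (s + 1) * a p = s * a p + a p := by ring
          have hvbl : a p ≤ valL b ℓ := by omega
          have hbw : valL b m ≤ b w := by
            have : b w = valL b ℓ := by rw [valL_eq b hℓb, ← hwe]
            omega
          have h6 := Q6 b w m hm1 hbw
          have h1 := Q1 a p (m + 1)
          omega
  · -- ℓ < κ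
    have h3 := Q3 b w κ (by omega)
    have h1 := Q1 a p κ
    have := hmaj κ
    omega

end LSC

namespace LSC

variable (G : SimpleGraph V) [DecidableRel G.Adj] (ξ : V → List V)

lemma lsNext_lt (x : V → ℕ) (u : V) (h : lsNext G ξ x u ≠ u) :
    x (lsNext G ξ x u) < x u := by
  rcases harg : ((ξ u).filter (fun w => decide (G.Adj u w ∧ x w < x u))).argmin x with _ | v
  · exact absurd (by unfold lsNext; rw [harg]; rfl) h
  · have hsome : lsNext G ξ x u = v := by unfold lsNext; rw [harg]; rfl
    rw [hsome]
    have hv := List.argmin_mem harg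
    have := (List.mem_filter.mp hv).2
    exact (of_decide_eq_true this).2

lemma lsIter_lt (x : V → ℕ) : ∀ (m : ℕ) (u : V),
    lsIter G ξ x m u = u ∨ x (lsIter G ξ x m u) < x u := by
  intro m
  induction m with
  | zero => intro u; exact Or.inl rfl
  | succ m ih =>
    intro u
    by_cases h : lsNext G ξ x u = u
    · simp only [lsIter, if_pos h]; exact Or.inl trivial
    · simp only [lsIter, if_neg h]
      have hlt := lsNext_lt G ξ x u h
      rcases ih (lsNext G ξ x u) with heq | hlt2
      · rw [heq]; exact Or.inr hlt
      · exact Or.inr (lt_trans hlt2 hlt)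

lemma lsPlace_spec (x : V → ℕ) (u : V) :
    lsPlace G ξ x u = u ∨ x (lsPlace G ξ x u) < x u := lsIter_lt G ξ x (x u) u

lemma lsAdd_eq (x : V → ℕ) (u : V) : lsAdd G ξ x u = add1 x (lsPlace G ξ x u) := rfl

/-- The coupled one-choice birthplaces: at each step, the one-choice ball goes to the
vertex whose rank (in the one-choice loads) equals the rank of the local-search ball's
birthplace (in the local-search loads). -/
noncomputable def cpl : (V → ℕ) → (V → ℕ) → List V → List V
  | _, _, [] => []
  | a, b, u :: us =>
    (L b).getD ((L a).idxOf u) u ::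
      cpl (add1 a (lsPlace G ξ a u)) (add1 b ((L b).getD ((L a).idxOf u) u)) us

lemma cpl_length : ∀ (us : List V) (a b : V → ℕ), (cpl G ξ a b us).length = us.length := by
  intro us
  induction us with
  | nil => intro a b; rfl
  | cons u us ih => intro a b; simp only [cpl, List.length_cons, ih]

lemma cpl_inj : ∀ (us vs : List V) (a b : V → ℕ), us.length = vs.length →
    cpl G ξ a b us = cpl G ξ a b vs → us = vs := by
  intro us
  induction us with
  | nil =>
    intro vs a b hlen _
    cases vs with
    | nil => rfl
    | cons v vs => simp at hlen
  | cons u us ih =>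
    intro vs a b hlen heq
    cases vs with
    | nil => simp at hlen
    | cons v vs =>
      simp only [cpl, List.cons.injEq] at heq
      obtain ⟨hw, htail⟩ := heq
      have hub : (L a).idxOf u < (L b).length := by
        have := L_indexOf_lt a u
        rw [L_length] at this ⊢
        exact this
      have hvb : (L a).idxOf v < (L b).length := by
        have := L_indexOf_lt a v
        rw [L_length] at this ⊢
        exact this
      rw [List.getD_eq_getElem _ _ hub, List.getD_eq_getElem _ _ hvb] at hw
      have hidx : (L a).idxOf u = (L a).idxOf v :=
        ((L_nodup b).getElem_inj_iff).mp hw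
      have hu : u = v := (List.idxOf_inj (L_mem a u)).mp hidx
      subst hu
      have := ih vs (add1 a (lsPlace G ξ a u))
        (add1 b ((L b).getD ((L a).idxOf u) u)) (by simpa using hlen) htail
      rw [this]

lemma cpl_maj : ∀ (us : List V) (a b : V → ℕ), (∀ κ, PL a κ ≤ PL b κ) →
    ∀ κ, PL (us.foldl (lsAdd G ξ) a) κ ≤ PL ((cpl G ξ a b us).foldl add1 b) κ := by
  intro us
  induction us with
  | nil => intro a b h κ; exact h κ
  | cons u us ih =>
    intro a b h κ
    simp only [cpl, List.foldl_cons]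
    rw [lsAdd_eq]
    exact ih _ _ (stepLemma a b u (lsPlace G ξ a u) h (lsPlace_spec G ξ a u)) κ

lemma foldl_add1_count : ∀ (ws : List V) (b : V → ℕ) (v : V),
    (ws.foldl add1 b) v = b v + ws.count v := by
  intro ws
  induction ws with
  | nil => intro b v; simp
  | cons w t ih =>
    intro b v
    simp only [List.foldl_cons, List.count_cons, ih]
    simp only [add1, beq_iff_eq]
    by_cases hvw : v = w
    · subst hvw; simp only [if_pos rfl]; omega
    · simp [hvw, Ne.symm hvw]

lemma maj_of_PL (b a : V → ℕ) (h : ∀ κ, PL a κ ≤ PL b κ) : Majorizes b a := by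
  intro A
  refine ⟨Bset b A.card, ?_, ?_⟩
  · rw [card_Bset]
    have h1 : A.card ≤ Fintype.card V := Finset.card_le_univ A
    omega
  · calc ∑ v ∈ A, a v ≤ PL a A.card := sum_le_PL a A
      _ ≤ PL b A.card := h _
      _ = ∑ v ∈ Bset b A.card, b v := PL_eq_sum_Bset b A.card

lemma sup_le_of_maj {b a : V → ℕ} (h : Majorizes b a) :
    Finset.univ.sup a ≤ Finset.univ.sup b := by
  refine Finset.sup_le fun v _ => ?_
  obtain ⟨B, hBcard, hle⟩ := h {v}
  rw [Finset.card_singleton] at hBcard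
  obtain ⟨w, rfl⟩ := Finset.card_eq_one.mp hBcard
  rw [Finset.sum_singleton, Finset.sum_singleton] at hle
  exact hle.trans (Finset.le_sup (Finset.mem_univ w))

end LSC

/-- **Comparison with the 1-choice process.**
For any `k ≥ 0` there is a coupling (a measure-preserving bijection of the uniform
finite sample space of birthplace sequences) under which, with probability 1, the
1-choice load vector majorizes the local search load vector.  Consequently the
maximum load of the 1-choice process stochastically dominates the maximum load of
the local search allocation. -/
theorem lsLoads_majorized_by_oneChoice (G : SimpleGraph V) [DecidableRel G.Adj]
    (ξ : V → List V)
    (hξ : ∀ v, (ξ v).Nodup ∧ ∀ w, w ∈ ξ v ↔ G.Adj v w)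
    (k : ℕ) :
    (∃ φ : (Fin k → V) ≃ (Fin k → V), ∀ bs : Fin k → V,
        Majorizes (oneChoiceLoads (List.ofFn (φ bs))) (lsLoads G ξ (List.ofFn bs)))
    ∧ ∀ x : ℕ,
        (univ.filter (fun bs : Fin k → V =>
          x ≤ univ.sup (lsLoads G ξ (List.ofFn bs)))).card
        ≤ (univ.filter (fun bs : Fin k → V =>
          x ≤ univ.sup (oneChoiceLoads (List.ofFn bs)))).card := by
  classical
  let Φ : (Fin k → V) → (Fin k → V) := fun bs i =>
    (LSC.cpl G ξ (fun _ => 0) (fun _ => 0) (List.ofFn bs)).getD i (bs i)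
  have hlen : ∀ bs : Fin k → V,
      (LSC.cpl G ξ (fun _ => 0) (fun _ => 0) (List.ofFn bs)).length = k := by
    intro bs; rw [LSC.cpl_length, List.length_ofFn]
  have hofn : ∀ bs : Fin k → V,
      List.ofFn (Φ bs) = LSC.cpl G ξ (fun _ => 0) (fun _ => 0) (List.ofFn bs) := by
    intro bs
    apply List.ext_getElem
    · rw [List.length_ofFn, hlen]
    · intro i h1 h2
      rw [List.getElem_ofFn]
      show Φ bs ⟨i, by simpa using h1⟩ = _
      simp only [Φ]
      rw [List.getD_eq_getElem _ _ h2]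
  have hinj : Function.Injective Φ := by
    intro bs1 bs2 hΦ
    have h1 : List.ofFn (Φ bs1) = List.ofFn (Φ bs2) := by rw [hΦ]
    rw [hofn, hofn] at h1
    have := LSC.cpl_inj G ξ (List.ofFn bs1) (List.ofFn bs2) _ _ (by simp) h1
    exact List.ofFn_injective this
  let φ : (Fin k → V) ≃ (Fin k → V) :=
    Equiv.ofBijective Φ ((Finite.injective_iff_bijective).mp hinj)
  have hmajφ : ∀ bs : Fin k → V,
      Majorizes (oneChoiceLoads (List.ofFn (φ bs))) (lsLoads G ξ (List.ofFn bs)) := by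
    intro bs
    have hφ : φ bs = Φ bs := rfl
    have hcm := LSC.cpl_maj G ξ (List.ofFn bs) (fun _ => 0) (fun _ => 0)
      (fun κ => le_refl _)
    have hoc : oneChoiceLoads (List.ofFn (φ bs))
        = (LSC.cpl G ξ (fun _ => 0) (fun _ => 0) (List.ofFn bs)).foldl LSC.add1
            (fun _ => 0) := by
      funext v
      rw [hφ, hofn, LSC.foldl_add1_count]
      simp [oneChoiceLoads]
    have hls : lsLoads G ξ (List.ofFn bs)
        = (List.ofFn bs).foldl (lsAdd G ξ) (fun _ => 0) := rfl
    rw [hoc, hls]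
    exact LSC.maj_of_PL _ _ hcm
  refine ⟨⟨φ, hmajφ⟩, ?_⟩
  intro x
  refine Finset.card_le_card_of_injOn (fun bs => φ bs) ?_ ?_
  · intro bs hbs
    simp only [Finset.mem_coe, Finset.mem_filter, Finset.mem_univ, true_and] at hbs ⊢
    exact hbs.trans (LSC.sup_le_of_maj (hmajφ bs))
  · exact fun b1 _ b2 _ h => φ.injective h
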